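/- The set Z of trivalent trees in (X_2, d_2) has infinite lower box dimension: liminf_{m→∞} (1/m)·log Λ(Z, m) = ∞. -/

import Mathlib

open Filter
open scoped ENNReal

noncomputable section

namespace GraphTrees

/-- The word length of an element of a free group: the length of its reduced word. -/
def wlen {n : ℕ} (g : FreeGroup (Fin n)) : ℕ := (FreeGroup.toWord g).length

/-- `h` is a prefix of `g`. -/
def IsPref {n : ℕ} (h g : FreeGroup (Fin n)) : Prop :=
  wlen h + wlen (h⁻¹ * g) = wlen g

/-- Vertex sets of infinite connected subtrees of the Cayley graph of the free group on
`n` generators which contain the identity: subsets containing `1`, infinite, and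
prefix-closed. -/
def IsTree {n : ℕ} (S : Set (FreeGroup (Fin n))) : Prop :=
  1 ∈ S ∧ S.Infinite ∧ ∀ g ∈ S, ∀ h : FreeGroup (Fin n), IsPref h g → h ∈ S

/-- The space `X n` of pointed trees. -/
def X (n : ℕ) : Type := {S : Set (FreeGroup (Fin n)) // IsTree S}

variable {n : ℕ}

/-- The pattern `B_S(m)` of radius `m` of a pointed tree. -/
def ball (S : X n) (m : ℕ) : Set (FreeGroup (Fin n)) := {g ∈ S.1 | wlen g ≤ m}

/-- The set of radii on which two pointed trees have the same pattern. -/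
def agreeSet (S S' : X n) : Set ℕ := {m | ball S m = ball S' m}

/-- The ball metric on the space of pointed trees. -/
def tdist (S S' : X n) : ℝ :=
  letI := Classical.propDecidable (S = S')
  if S = S' then 0 else Real.exp (-((sSup (agreeSet S S') : ℕ) : ℝ))

theorem tdist_eq_of_ne {x y : X n} (h : x ≠ y) :
    tdist x y = Real.exp (-((sSup (agreeSet x y) : ℕ) : ℝ)) := by
  unfold tdist
  rw [if_neg h]

theorem ball_mono_eq {x y : X n} {k m : ℕ} (hkm : k ≤ m)
    (h : ball x m = ball y m) : ball x k = ball y k := by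
  ext g
  constructor
  · rintro ⟨hg, hlen⟩
    have hx : g ∈ ball x m := ⟨hg, hlen.trans hkm⟩
    rw [h] at hx
    exact ⟨hx.1, hlen⟩
  · rintro ⟨hg, hlen⟩
    have hy : g ∈ ball y m := ⟨hg, hlen.trans hkm⟩
    rw [← h] at hy
    exact ⟨hy.1, hlen⟩

theorem eq_of_agree_all {x y : X n} (h : ∀ m, ball x m = ball y m) : x = y := by
  apply Subtype.ext
  ext g
  constructor
  · intro hg
    have hx : g ∈ ball x (wlen g) := ⟨hg, le_rfl⟩
    rw [h] at hx
    exact hx.1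
  · intro hg
    have hy : g ∈ ball y (wlen g) := ⟨hg, le_rfl⟩
    rw [← h] at hy
    exact hy.1

theorem bddAbove_agreeSet {x y : X n} (h : x ≠ y) : BddAbove (agreeSet x y) := by
  by_contra hb
  refine h (eq_of_agree_all fun m => ?_)
  rcases not_bddAbove_iff.mp hb m with ⟨k, hk, hmk⟩
  exact ball_mono_eq hmk.le hk

theorem ball_zero (x : X n) : ball x 0 = {1} := by
  ext g
  simp only [ball, Set.mem_setOf_eq, Nat.le_zero, Set.mem_singleton_iff]
  constructor
  · rintro ⟨hg, hlen⟩
    exact FreeGroup.toWord_eq_nil_iff.mp (List.length_eq_zero_iff.mp hlen)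
  · rintro rfl
    exact ⟨x.2.1, by simp [wlen]⟩

theorem zero_mem_agreeSet (x y : X n) : (0 : ℕ) ∈ agreeSet x y := by
  show ball x 0 = ball y 0
  rw [ball_zero, ball_zero]

theorem tdist_nonneg (x y : X n) : 0 ≤ tdist x y := by
  rcases eq_or_ne x y with rfl | h
  · unfold tdist
    rw [if_pos rfl]
  · rw [tdist_eq_of_ne h]
    exact (Real.exp_pos _).le

theorem tdist_self (x : X n) : tdist x x = 0 := by
  unfold tdist
  rw [if_pos rfl]

theorem tdist_comm (x y : X n) : tdist x y = tdist y x := by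
  by_cases h : x = y
  · subst h; rfl
  · have hs : agreeSet x y = agreeSet y x := by
      ext m
      exact eq_comm
    rw [tdist_eq_of_ne h, tdist_eq_of_ne (Ne.symm h), hs]

theorem tdist_ultra (x y z : X n) : tdist x z ≤ max (tdist x y) (tdist y z) := by
  rcases eq_or_ne x z with rfl | hxz
  · exact le_max_of_le_left (by rw [tdist_self]; exact tdist_nonneg x y)
  rcases eq_or_ne x y with rfl | hxy
  · exact le_max_of_le_right le_rfl
  rcases eq_or_ne y z with rfl | hyz
  · exact le_max_of_le_left le_rfl
  have hbxy := bddAbove_agreeSet hxy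
  have hbyz := bddAbove_agreeSet hyz
  have hbxz := bddAbove_agreeSet hxz
  have hma : sSup (agreeSet x y) ∈ agreeSet x y :=
    Nat.sSup_mem ⟨0, zero_mem_agreeSet x y⟩ hbxy
  have hmb : sSup (agreeSet y z) ∈ agreeSet y z :=
    Nat.sSup_mem ⟨0, zero_mem_agreeSet y z⟩ hbyz
  have hmin : min (sSup (agreeSet x y)) (sSup (agreeSet y z)) ∈ agreeSet x z := by
    have h1 : ball x (min (sSup (agreeSet x y)) (sSup (agreeSet y z)))
        = ball y (min (sSup (agreeSet x y)) (sSup (agreeSet y z))) :=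
      ball_mono_eq (min_le_left _ _) hma
    have h2 : ball y (min (sSup (agreeSet x y)) (sSup (agreeSet y z)))
        = ball z (min (sSup (agreeSet x y)) (sSup (agreeSet y z))) :=
      ball_mono_eq (min_le_right _ _) hmb
    exact h1.trans h2
  have hle : min (sSup (agreeSet x y)) (sSup (agreeSet y z)) ≤ sSup (agreeSet x z) :=
    le_csSup hbxz hmin
  rw [tdist_eq_of_ne hxz, tdist_eq_of_ne hxy, tdist_eq_of_ne hyz]
  rcases le_total (sSup (agreeSet x y)) (sSup (agreeSet y z)) with hab | hab
  · refine le_max_of_le_left (Real.exp_le_exp.mpr ?_)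
    have h2 : ((sSup (agreeSet x y) : ℕ) : ℝ) ≤ ((sSup (agreeSet x z) : ℕ) : ℝ) := by
      exact_mod_cast (min_eq_left hab) ▸ hle
    linarith
  · refine le_max_of_le_right (Real.exp_le_exp.mpr ?_)
    have h2 : ((sSup (agreeSet y z) : ℕ) : ℝ) ≤ ((sSup (agreeSet x z) : ℕ) : ℝ) := by
      exact_mod_cast (min_eq_right hab) ▸ hle
    linarith

theorem tdist_triangle (x y z : X n) : tdist x z ≤ tdist x y + tdist y z :=
  (tdist_ultra x y z).trans
    (max_le (le_add_of_nonneg_right (tdist_nonneg y z))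
      (le_add_of_nonneg_left (tdist_nonneg x y)))

instance : MetricSpace (X n) where
  dist := tdist
  dist_self := tdist_self
  dist_comm := tdist_comm
  dist_triangle := tdist_triangle
  eq_of_dist_eq_zero := by
    intro x y h
    by_contra hne
    have h' : tdist x y = 0 := h
    rw [tdist_eq_of_ne hne] at h'
    exact (Real.exp_pos _).ne' h'

theorem dist_eq_tdist (x y : X n) : dist x y = tdist x y := rfl

/-- The translate `S · g` of a tree `S` by a vertex `g ∈ S`. -/
def translate {n : ℕ} (S : Set (FreeGroup (Fin n))) (g : FreeGroup (Fin n)) :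
    Set (FreeGroup (Fin n)) := (fun h => g⁻¹ * h) '' S

/-- The orbit `O(S) = {S · g : g ∈ S}` of a pointed tree under the pseudogroup action. -/
def orbit (S : X n) : Set (X n) := {S' | ∃ g ∈ S.1, S'.1 = translate S.1 g}

/-- A subset `Y ⊆ X n` is invariant under the pseudogroup action. -/
def Invariant (Y : Set (X n)) : Prop :=
  ∀ S ∈ Y, ∀ g ∈ S.1, ∀ S' : X n, S'.1 = translate S.1 g → S' ∈ Y

/-- `Λ(Z, m)`: the number of distinct patterns of radius `m` of trees in `Z`. -/
def Lam (Z : Set (X n)) (m : ℕ) : ℕ := ((fun S => ball S m) '' Z).ncard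

/-- The lower box dimension of a subset of the space of pointed trees. -/
def lowerBox (Z : Set (X n)) : ℝ≥0∞ :=
  Filter.liminf (fun m : ℕ => ENNReal.ofReal (Real.log (Lam Z m)) / (m : ℝ≥0∞)) Filter.atTop

/-- The upper box dimension of a subset of the space of pointed trees. -/
def upperBox (Z : Set (X n)) : ℝ≥0∞ :=
  Filter.limsup (fun m : ℕ => ENNReal.ofReal (Real.log (Lam Z m)) / (m : ℝ≥0∞)) Filter.atTop



/-! ### Auxiliary development -/

abbrev Ltr := Fin 2 × Bool
def la : Ltr := ((0 : Fin 2), true)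
def lA : Ltr := ((0 : Fin 2), false)
def lb : Ltr := ((1 : Fin 2), true)
def lB : Ltr := ((1 : Fin 2), false)
def linv (x : Ltr) : Ltr := (x.1, !x.2)
inductive St | root | node | mid | fill
deriving DecidableEq
def dlt : St → Ltr → St
  | .root, x => if x = la then .node else .fill
  | .node, _ => .mid
  | .mid, x => if x = la then .node else .fill
  | .fill, _ => .fill
def st (w : List Ltr) : St := w.foldl dlt .root
lemma st_nil : st [] = .root := rfl
lemma st_snoc (w : List Ltr) (x : Ltr) : st (w ++ [x]) = dlt (st w) x := by
  simp [st, List.foldl_append]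
def rfl2 (y : Ltr) : Finset Ltr := {y, ((1 - y.1 : Fin 2), true)}
def nxt (ε : List Ltr → Bool) (w : List Ltr) : Finset Ltr :=
  if st w = .root then {la, lb, lA}
  else if st w = .node then {lb, lB}
  else if st w = .mid then {la, if ε w then lA else w.getLastD la}
  else rfl2 (w.getLastD la)
lemma nxt_root {ε : List Ltr → Bool} {w} (h : st w = .root) : nxt ε w = {la, lb, lA} := by
  simp [nxt, h]
lemma nxt_node {ε : List Ltr → Bool} {w} (h : st w = .node) : nxt ε w = {lb, lB} := by
  simp [nxt, h]
lemma nxt_mid {ε : List Ltr → Bool} {w} (h : st w = .mid) :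
    nxt ε w = {la, if ε w then lA else w.getLastD la} := by
  simp [nxt, h]
lemma nxt_fill {ε : List Ltr → Bool} {w} (h : st w = .fill) :
    nxt ε w = rfl2 (w.getLastD la) := by
  simp [nxt, h]
def Legal (ε : List Ltr → Bool) (w : List Ltr) : Prop :=
  ∀ u x v, w = u ++ x :: v → x ∈ nxt ε u
lemma legal_nil (ε : List Ltr → Bool) : Legal ε [] := by
  intro u x v h
  exact absurd h (by simp)
lemma Legal.of_append {ε : List Ltr → Bool} {w₁ w₂} (h : Legal ε (w₁ ++ w₂)) : Legal ε w₁ := by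
  intro u x v hv
  exact h u x (v ++ w₂) (by rw [hv]; simp)
lemma legal_snoc_iff {ε : List Ltr → Bool} {w x} :
    Legal ε (w ++ [x]) ↔ Legal ε w ∧ x ∈ nxt ε w := by
  constructor
  · intro h
    exact ⟨h.of_append, h w x [] rfl⟩
  · rintro ⟨hw, hx⟩ u y v huv
    rcases v.eq_nil_or_concat with rfl | ⟨v', z, rfl⟩
    · have hl : w.length = u.length := by
        have := congrArg List.length huv
        simpa using this
      obtain ⟨rfl, h2⟩ := List.append_inj huv hl
      obtain rfl : x = y := by simpa using h2
      exact hx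
    · have huv' : w ++ [x] = (u ++ y :: v') ++ [z] := by rw [huv]; simp
      obtain ⟨h1, h2⟩ := List.append_inj' huv' (by simp)
      exact hw u y v' h1

-- NEW PART
lemma legal_shape {ε : List Ltr → Bool} : ∀ {w}, Legal ε w →
    (st w = .root → w = []) ∧
    (st w = .node → w.getLastD la = la) ∧
    (st w = .mid → w.getLastD la = lb ∨ w.getLastD la = lB) := by
  intro w
  induction w using List.reverseRecOn with
  | nil =>
    intro _
    refine ⟨fun _ => rfl, fun h => ?_, fun h => ?_⟩ <;> rw [st_nil] at h <;> cases h
  | append_singleton u x ih =>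
    intro h
    have hu := h.of_append
    have hx : x ∈ nxt ε u := h u x [] rfl
    obtain ⟨s1, s2, s3⟩ := ih hu
    rw [st_snoc, List.getLastD_concat]
    cases hsu : st u with
    | root =>
      rw [nxt_root hsu] at hx
      simp only [Finset.mem_insert, Finset.mem_singleton] at hx
      rcases hx with rfl | rfl | rfl <;>
        refine ⟨fun hc => ?_, fun hc => ?_, fun hc => ?_⟩ <;>
        first
          | (revert hc; decide)
          | (exact absurd hc (by decide))
    | node =>
      rw [nxt_node hsu] at hx
      simp only [Finset.mem_insert, Finset.mem_singleton] at hx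
      rcases hx with rfl | rfl <;>
        refine ⟨fun hc => ?_, fun hc => ?_, fun hc => ?_⟩ <;>
        first
          | (revert hc; decide)
          | (exact absurd hc (by decide))
    | mid =>
      rw [nxt_mid hsu] at hx
      simp only [Finset.mem_insert, Finset.mem_singleton] at hx
      have hx' : x = la ∨ x = lA ∨ x = lb ∨ x = lB := by
        rcases hx with rfl | rfl
        · exact Or.inl rfl
        · cases hε : ε u
          · rcases s3 hsu with hl | hl <;> rw [hε] at *
            · simp only [if_neg Bool.false_ne_true] at *
              rw [hl]
              exact Or.inr (Or.inr (Or.inl rfl))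
            · simp only [if_neg Bool.false_ne_true] at *
              rw [hl]
              exact Or.inr (Or.inr (Or.inr rfl))
          · simp only [hε, if_pos rfl]
            exact Or.inr (Or.inl rfl)
      rcases hx' with rfl | rfl | rfl | rfl <;>
        refine ⟨fun hc => ?_, fun hc => ?_, fun hc => ?_⟩ <;>
        first
          | (revert hc; decide)
          | (exact absurd hc (by decide))
    | fill =>
      refine ⟨fun hc => ?_, fun hc => ?_, fun hc => ?_⟩ <;> simp [dlt] at hc

lemma nxt_notinv {ε : List Ltr → Bool} {w} (h : Legal ε w) (hne : w ≠ []) :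
    linv (w.getLastD la) ∉ nxt ε w := by
  obtain ⟨s1, s2, s3⟩ := legal_shape h
  intro hmem
  cases hsu : st w with
  | root => exact hne (s1 hsu)
  | node =>
    rw [s2 hsu, nxt_node hsu] at hmem
    revert hmem; decide
  | mid =>
    rw [nxt_mid hsu] at hmem
    rcases s3 hsu with hl | hl <;> rw [hl] at hmem <;> cases hε : ε w <;>
      rw [hε] at hmem <;> revert hmem <;> decide
  | fill =>
    rw [nxt_fill hsu] at hmem
    exact (by decide : ∀ y : Ltr, linv y ∉ rfl2 y) _ hmem

def NoCancel (w : List Ltr) : Prop := w.Chain' (fun a b => ¬(a.1 = b.1 ∧ a.2 = !b.2))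

lemma nocancel_reduce : ∀ {w}, NoCancel w → FreeGroup.reduce w = w := by
  intro w
  induction w with
  | nil => intro _; rfl
  | cons x t ih =>
    intro h
    have ht : NoCancel t := h.tail
    have h1 : ∀ y ∈ t.head?, ¬(x.1 = y.1 ∧ x.2 = !y.2) := (List.isChain_cons.mp h).1
    rw [FreeGroup.reduce.cons, ih ht]
    cases t with
    | nil => rfl
    | cons hd tl =>
      simp only []
      rw [if_neg (h1 hd rfl)]

lemma legal_nocancel {ε : List Ltr → Bool} : ∀ {w}, Legal ε w → NoCancel w := by
  intro w
  induction w using List.reverseRecOn with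
  | nil => intro _; exact List.isChain_nil
  | append_singleton u x ih =>
    intro h
    obtain ⟨hu, hx⟩ := legal_snoc_iff.mp h
    refine List.isChain_append.mpr ⟨ih hu, List.isChain_singleton _, ?_⟩
    intro a ha y hy
    obtain rfl : x = y := by simpa using hy
    rintro ⟨e1, e2⟩
    have hune : u ≠ [] := by
      intro h0
      rw [h0] at ha
      simp at ha
    have hgl : u.getLastD la = a := by
      rw [List.getLastD_eq_getLast?, ha]
      rfl
    have hxa : x = linv a := by
      have h2 : x.2 = !a.2 := by rw [e2, Bool.not_not]
      exact Prod.ext e1.symm h2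
    have := nxt_notinv hu hune
    rw [hgl] at this
    exact this (hxa ▸ hx)

lemma legal_toWord {ε : List Ltr → Bool} {w} (h : Legal ε w) :
    (FreeGroup.mk w).toWord = w := by
  rw [FreeGroup.toWord_mk, nocancel_reduce (legal_nocancel h)]


def TreeSet (ε : List Ltr → Bool) : Set (FreeGroup (Fin 2)) := {g | Legal ε g.toWord}

lemma red_eq_of_length {α : Type*} {L M : List (α × Bool)} (h : FreeGroup.Red L M)
    (hl : L.length = M.length) : L = M := by
  rcases Relation.ReflTransGen.cases_head h with rfl | ⟨L', hs, hr⟩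
  · rfl
  · have h1 := hs.length
    have h2 := FreeGroup.Red.length_le hr
    omega

lemma isPref_append {h g : FreeGroup (Fin 2)} (hp : IsPref h g) :
    ∃ t, g.toWord = h.toWord ++ t := by
  refine ⟨(h⁻¹ * g).toWord, ?_⟩
  have hg : g = FreeGroup.mk (h.toWord ++ (h⁻¹ * g).toWord) := by
    rw [← FreeGroup.mul_mk, FreeGroup.mk_toWord, FreeGroup.mk_toWord, mul_inv_cancel_left]
  have hred : FreeGroup.Red (h.toWord ++ (h⁻¹ * g).toWord) g.toWord := by
    have h2 := FreeGroup.reduce.red (L := h.toWord ++ (h⁻¹ * g).toWord)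
    rwa [← FreeGroup.toWord_mk, ← hg] at h2
  refine (red_eq_of_length hred ?_).symm
  rw [List.length_append]
  exact hp

lemma st_replicate_lb (k : ℕ) : st (List.replicate (k+1) lb) = .fill := by
  induction k with
  | zero => decide
  | succ k ih =>
    rw [List.replicate_succ', st_snoc, ih]
    rfl

lemma getLastD_replicate_lb (k : ℕ) : (List.replicate (k+1) lb).getLastD la = lb := by
  rw [List.replicate_succ', List.getLastD_concat]

lemma legal_replicate_lb (ε : List Ltr → Bool) (k : ℕ) :
    Legal ε (List.replicate (k+1) lb) := by
  induction k with
  | zero =>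
    show Legal ε ([] ++ [lb])
    exact legal_snoc_iff.mpr ⟨legal_nil ε, by rw [nxt_root st_nil]; decide⟩
  | succ k ih =>
    rw [List.replicate_succ']
    refine legal_snoc_iff.mpr ⟨ih, ?_⟩
    rw [nxt_fill (st_replicate_lb k), getLastD_replicate_lb]
    decide

lemma isTree_treeSet (ε : List Ltr → Bool) : IsTree (TreeSet ε) := by
  refine ⟨?_, ?_, ?_⟩
  · show Legal ε (1 : FreeGroup (Fin 2)).toWord
    rw [FreeGroup.toWord_one]
    exact legal_nil ε
  · apply Set.infinite_of_injective_forall_mem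
      (f := fun k : ℕ => FreeGroup.mk (List.replicate (k+1) lb))
    · intro k k' hkk
      have h1 := congrArg FreeGroup.toWord hkk
      rw [legal_toWord (legal_replicate_lb ε k), legal_toWord (legal_replicate_lb ε k')] at h1
      have := congrArg List.length h1
      simpa using this
    · intro k
      show Legal ε _
      rw [legal_toWord (legal_replicate_lb ε k)]
      exact legal_replicate_lb ε k
  · intro g hg h hp
    obtain ⟨t, ht⟩ := isPref_append hp
    show Legal ε h.toWord
    have h2 : Legal ε (h.toWord ++ t) := ht ▸ hg
    exact h2.of_append


lemma toWord_mul_single {g : FreeGroup (Fin 2)} (ℓ : Ltr)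
    (hw : NoCancel g.toWord)
    (hc : ∀ a, g.toWord.getLast? = some a → ℓ ≠ linv a) :
    (g * FreeGroup.mk [ℓ]).toWord = g.toWord ++ [ℓ] := by
  conv_lhs => rw [← FreeGroup.mk_toWord (x := g)]
  rw [FreeGroup.mul_mk, FreeGroup.toWord_mk]
  apply nocancel_reduce
  refine List.isChain_append.mpr ⟨hw, List.isChain_singleton _, ?_⟩
  intro a ha y hy
  obtain rfl : ℓ = y := by simpa using hy
  rintro ⟨e1, e2⟩
  refine hc a ha (Prod.ext e1.symm ?_)
  show ℓ.2 = !a.2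
  rw [e2, Bool.not_not]

lemma mk_single_mul_linv (x : Ltr) :
    FreeGroup.mk [x] * FreeGroup.mk [linv x] = (1 : FreeGroup (Fin 2)) := by
  have h : FreeGroup.mk [linv x] = (FreeGroup.mk [x])⁻¹ := by
    rw [FreeGroup.inv_mk]
    congr 1
  rw [h, mul_inv_cancel]

theorem trivalent {ε : List Ltr → Bool} {g : FreeGroup (Fin 2)} (hg : g ∈ TreeSet ε) :
    ({h ∈ TreeSet ε | wlen (g⁻¹ * h) = 1} : Set (FreeGroup (Fin 2))).encard = 3 := by
  classical
  set w := g.toWord with hw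
  have hlw : Legal ε w := hg
  set C : Finset Ltr :=
    if w = [] then nxt ε w else insert (linv (w.getLastD la)) (nxt ε w) with hC
  have hset : {h ∈ TreeSet ε | wlen (g⁻¹ * h) = 1}
      = (fun ℓ : Ltr => g * FreeGroup.mk [ℓ]) '' ↑C := by
    ext h
    simp only [Set.mem_setOf_eq, Set.mem_image, Finset.mem_coe]
    constructor
    · rintro ⟨hmem, hlen⟩
      obtain ⟨ℓ, hℓ⟩ := List.length_eq_one_iff.mp hlen
      have hh : h = g * FreeGroup.mk [ℓ] := by
        have h2 := FreeGroup.mk_toWord (x := g⁻¹ * h)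
        rw [hℓ] at h2
        rw [h2, mul_inv_cancel_left]
      refine ⟨ℓ, ?_, hh.symm⟩
      by_cases h0 : w = []
      · have hg1 : g = 1 := FreeGroup.toWord_eq_nil_iff.mp (hw ▸ h0)
        have hhw : h.toWord = [ℓ] := by
          rw [hh, hg1, one_mul, FreeGroup.toWord_mk, FreeGroup.reduce_singleton]
        have h3 : ℓ ∈ nxt ε [] := hmem [] ℓ [] (by simpa using hhw)
        rw [hC, if_pos h0, h0]
        exact h3
      · rw [hC, if_neg h0, Finset.mem_insert]
        by_cases hcan : ℓ = linv (w.getLastD la)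
        · exact Or.inl hcan
        · right
          have htw : h.toWord = w ++ [ℓ] := by
            rw [hh]
            refine toWord_mul_single ℓ (legal_nocancel hlw) ?_
            intro a ha
            rw [List.getLastD_eq_getLast?, ha] at hcan
            exact hcan
          have h4 : Legal ε (w ++ [ℓ]) := htw ▸ hmem
          exact h4 w ℓ [] rfl
    · rintro ⟨ℓ, hℓ, rfl⟩
      refine ⟨?_, ?_⟩
      · show Legal ε (g * FreeGroup.mk [ℓ]).toWord
        by_cases h0 : w = []
        · rw [hC, if_pos h0, h0] at hℓ
          have hg1 : g = 1 := FreeGroup.toWord_eq_nil_iff.mp (hw ▸ h0)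
          rw [hg1, one_mul, FreeGroup.toWord_mk, FreeGroup.reduce_singleton]
          exact legal_snoc_iff.mpr ⟨legal_nil ε, hℓ⟩
        · rw [hC, if_neg h0, Finset.mem_insert] at hℓ
          rcases hℓ with hcan | hnx
          · have hgl : w.getLastD la = w.getLast h0 := by
              rw [List.getLastD_eq_getLast?, List.getLast?_eq_getLast h0]
              rfl
            have hgsplit : g = FreeGroup.mk w.dropLast * FreeGroup.mk [w.getLastD la] := by
              conv_lhs => rw [← FreeGroup.mk_toWord (x := g), ← hw]
              rw [FreeGroup.mul_mk, hgl]
              rw [List.dropLast_append_getLast h0]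
            have hprod : g * FreeGroup.mk [ℓ] = FreeGroup.mk w.dropLast := by
              rw [hgsplit, mul_assoc, hcan, mk_single_mul_linv, mul_one]
            have hld : Legal ε w.dropLast := by
              have h5 : Legal ε (w.dropLast ++ [w.getLast h0]) := by
                rw [List.dropLast_append_getLast h0]
                exact hlw
              exact h5.of_append
            rw [hprod, legal_toWord hld]
            exact hld
          · have hcan : ℓ ≠ linv (w.getLastD la) := by
              intro e
              exact nxt_notinv hlw h0 (e ▸ hnx)
            have htw : (g * FreeGroup.mk [ℓ]).toWord = w ++ [ℓ] := by
              refine toWord_mul_single ℓ (legal_nocancel hlw) ?_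
              intro a ha
              rw [List.getLastD_eq_getLast?, ha] at hcan
              exact hcan
            rw [htw]
            exact legal_snoc_iff.mpr ⟨hlw, hnx⟩
      · show wlen (g⁻¹ * (g * FreeGroup.mk [ℓ])) = 1
        rw [inv_mul_cancel_left]
        show (FreeGroup.mk [ℓ]).toWord.length = 1
        rw [FreeGroup.toWord_mk, FreeGroup.reduce_singleton]
        rfl
  have hinj : Function.Injective (fun ℓ : Ltr => g * FreeGroup.mk [ℓ]) := by
    intro ℓ ℓ' he
    have h1 : FreeGroup.mk [ℓ] = FreeGroup.mk [ℓ'] := mul_left_cancel he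
    have h2 := congrArg FreeGroup.toWord h1
    rw [FreeGroup.toWord_mk, FreeGroup.toWord_mk, FreeGroup.reduce_singleton,
      FreeGroup.reduce_singleton] at h2
    simpa using h2
  rw [hset, hinj.injOn.encard_image, Set.encard_coe_eq_coe_finsetCard]
  have hcard : C.card = 3 := by
    by_cases h0 : w = []
    · rw [hC, if_pos h0, h0, nxt_root st_nil]
      decide
    · rw [hC, if_neg h0, Finset.card_insert_of_notMem (nxt_notinv hlw h0)]
      have h2 : (nxt ε w).card = 2 := by
        obtain ⟨s1, s2, s3⟩ := legal_shape hlw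
        cases hsu : st w with
        | root => exact absurd (s1 hsu) h0
        | node => rw [nxt_node hsu]; decide
        | mid =>
          rw [nxt_mid hsu]
          rcases s3 hsu with hl | hl <;> rw [hl] <;> cases hε : ε w <;> decide
        | fill =>
          rw [nxt_fill hsu]
          exact (by decide : ∀ y : Ltr, (rfl2 y).card = 2) _
      omega
  rw [hcard]
  rfl

/-- The set of trivalent trees in `X 2`: every vertex has exactly three neighbours. -/
def Ztri : Set (X 2) :=
  {S | ∀ g ∈ S.1, ({h ∈ S.1 | wlen (g⁻¹ * h) = 1} : Set (FreeGroup (Fin 2))).encard = 3}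


def treeX (ε : List Ltr → Bool) : X 2 := ⟨TreeSet ε, isTree_treeSet ε⟩

lemma treeX_mem_Ztri (ε : List Ltr → Bool) : treeX ε ∈ Ztri := fun _ hg => trivalent hg


/-! ### The doubly exponential family -/

def xl (t : Bool) : Ltr := if t then lb else lB

def mws : List Bool → List Ltr
  | [] => []
  | t :: s => la :: xl t :: mws s

lemma mws_append (s : List Bool) (t : Bool) : mws (s ++ [t]) = mws s ++ [la, xl t] := by
  induction s with
  | nil => rfl
  | cons a u ih => simp [mws, ih]

lemma mws_length (s : List Bool) : (mws s).length = 2 * s.length := by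
  induction s with
  | nil => rfl
  | cons a u ih => simp [mws, ih]; omega

lemma mws_injective : Function.Injective mws := by
  intro s
  induction s with
  | nil =>
    intro s' h
    cases s' with
    | nil => rfl
    | cons t u => simp [mws] at h
  | cons t u ih =>
    intro s' h
    cases s' with
    | nil => simp [mws] at h
    | cons t' u' =>
      simp only [mws, List.cons.injEq] at h
      obtain ⟨-, h1, h2⟩ := h
      have ht : t = t' := by
        cases t <;> cases t' <;> first | rfl | (exact absurd h1 (by decide))
      rw [ht, ih h2]

lemma st_mws_la (s : List Bool) : dlt (st (mws s)) la = .node := by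
  induction s using List.reverseRecOn with
  | nil => decide
  | append_singleton u t ih =>
    rw [mws_append, show mws u ++ [la, xl t] = (mws u ++ [la]) ++ [xl t] by simp,
      st_snoc, st_snoc, ih]
    cases t <;> decide

lemma st_mws_mid (s : List Bool) (hs : s ≠ []) : st (mws s) = .mid := by
  obtain ⟨u, t, rfl⟩ : ∃ u t, s = u ++ [t] := by
    rcases s.eq_nil_or_concat with rfl | ⟨u, t, h⟩
    · exact absurd rfl hs
    · exact ⟨u, t, by simpa [List.concat_eq_append] using h⟩
  rw [mws_append, show mws u ++ [la, xl t] = (mws u ++ [la]) ++ [xl t] by simp,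
    st_snoc, st_snoc, st_mws_la]
  rfl

lemma getLastD_mws (s : List Bool) (t : Bool) : (mws (s ++ [t])).getLastD la = xl t := by
  rw [mws_append, show mws s ++ [la, xl t] = (mws s ++ [la]) ++ [xl t] by simp,
    List.getLastD_concat]

lemma legal_mws (ε : List Ltr → Bool) (s : List Bool) : Legal ε (mws s) := by
  induction s using List.reverseRecOn with
  | nil => exact legal_nil ε
  | append_singleton u t ih =>
    rw [mws_append, show mws u ++ [la, xl t] = (mws u ++ [la]) ++ [xl t] by simp]
    have h1 : Legal ε (mws u ++ [la]) := by
      refine legal_snoc_iff.mpr ⟨ih, ?_⟩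
      rcases eq_or_ne u [] with rfl | hu
      · show la ∈ nxt ε ([] : List Ltr)
        rw [nxt_root st_nil]
        decide
      · rw [nxt_mid (st_mws_mid u hu)]
        exact Finset.mem_insert_self _ _
    refine legal_snoc_iff.mpr ⟨h1, ?_⟩
    rw [nxt_node (by rw [st_snoc, st_mws_la])]
    cases t <;> decide

open scoped Classical in
def epsOf (K : ℕ) (φ : (Fin K → Bool) → Bool) : List Ltr → Bool := fun w =>
  if (∃ s : Fin K → Bool, w = mws (List.ofFn s) ∧ φ s = true) then true else false

lemma epsOf_true {K : ℕ} {φ : (Fin K → Bool) → Bool} {s : Fin K → Bool} (h : φ s = true) :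
    epsOf K φ (mws (List.ofFn s)) = true := by
  unfold epsOf
  rw [if_pos ⟨s, rfl, h⟩]

lemma epsOf_false {K : ℕ} {φ : (Fin K → Bool) → Bool} {s : Fin K → Bool} (h : φ s = false) :
    epsOf K φ (mws (List.ofFn s)) = false := by
  unfold epsOf
  rw [if_neg]
  rintro ⟨s', he, hs'⟩
  obtain rfl : s = s' := List.ofFn_injective (mws_injective he)
  rw [h] at hs'
  cases hs'

lemma ball_key {K m : ℕ} (hK : 1 ≤ K) (hm : 2 * K + 1 ≤ m)
    (φ φ' : (Fin K → Bool) → Bool)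
    (hb : ball (treeX (epsOf K φ)) m = ball (treeX (epsOf K φ')) m)
    (s : Fin K → Bool) (hs : φ s = true) : φ' s = true := by
  by_contra hns
  have hs' : φ' s = false := by revert hns; cases φ' s <;> simp
  set v := mws (List.ofFn s) with hv
  have hsne : List.ofFn s ≠ [] := by
    intro h0
    have := congrArg List.length h0
    simp at this
    omega
  have hstv : st v = .mid := st_mws_mid _ hsne
  have hnxt : nxt (epsOf K φ) v = {la, lA} := by
    have he := epsOf_true (φ := φ) hs
    rw [← hv] at he
    rw [nxt_mid hstv, he]
    simp
  have hlegal : Legal (epsOf K φ) (v ++ [lA]) :=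
    legal_snoc_iff.mpr ⟨legal_mws _ _, by rw [hnxt]; decide⟩
  set h : FreeGroup (Fin 2) := FreeGroup.mk (v ++ [lA]) with hh
  have htw : h.toWord = v ++ [lA] := legal_toWord hlegal
  have hwl : wlen h ≤ m := by
    show h.toWord.length ≤ m
    rw [htw, List.length_append, hv, mws_length]
    simp
    omega
  have hmem : h ∈ ball (treeX (epsOf K φ)) m :=
    ⟨show Legal _ h.toWord by rw [htw]; exact hlegal, hwl⟩
  rw [hb] at hmem
  have hlegal' : Legal (epsOf K φ') (v ++ [lA]) := by
    have h2 : Legal (epsOf K φ') h.toWord := hmem.1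
    rwa [htw] at h2
  have hlA : lA ∈ nxt (epsOf K φ') v := hlegal' v lA [] rfl
  obtain ⟨u, t, hst⟩ : ∃ u t, List.ofFn s = u ++ [t] := by
    rcases (List.ofFn s).eq_nil_or_concat with h0 | ⟨u, t, h0⟩
    · exact absurd h0 hsne
    · exact ⟨u, t, by simpa [List.concat_eq_append] using h0⟩
  have hgl : v.getLastD la = xl t := by rw [hv, hst, getLastD_mws]
  have he' := epsOf_false (φ := φ') hs'
  rw [← hv] at he'
  rw [nxt_mid hstv, he', hgl] at hlA
  revert hlA
  cases t <;> decide

lemma ball_injective {K m : ℕ} (hK : 1 ≤ K) (hm : 2 * K + 1 ≤ m) :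
    Function.Injective (fun φ : (Fin K → Bool) → Bool => ball (treeX (epsOf K φ)) m) := by
  intro φ φ' hb
  funext s
  cases h : φ s with
  | true => exact (ball_key hK hm φ φ' hb s h).symm
  | false =>
    cases h' : φ' s with
    | false => rfl
    | true =>
      have h2 := ball_key hK hm φ' φ hb.symm s h'
      rw [h2] at h
      cases h

lemma lam_lower {K m : ℕ} (hK : 1 ≤ K) (hm : 2 * K + 1 ≤ m) :
    2 ^ (2 ^ K) ≤ Lam Ztri m := by
  classical
  have hfin : ((fun S : X 2 => ball S m) '' Ztri).Finite := by
    have hU : ({g : FreeGroup (Fin 2) | wlen g ≤ m}).Finite := by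
      have he : {g : FreeGroup (Fin 2) | wlen g ≤ m}
          = FreeGroup.toWord ⁻¹' {l | l.length ≤ m} := rfl
      rw [he]
      exact Set.Finite.preimage FreeGroup.toWord_injective.injOn
        (List.finite_length_le (Fin 2 × Bool) m)
    refine Set.Finite.subset hU.finite_subsets ?_
    rintro t ⟨S, -, rfl⟩
    intro g hgmem
    exact hgmem.2
  have hrange : Set.range (fun φ : (Fin K → Bool) → Bool => ball (treeX (epsOf K φ)) m)
      ⊆ (fun S : X 2 => ball S m) '' Ztri := by
    rintro t ⟨φ, rfl⟩
    exact ⟨treeX (epsOf K φ), treeX_mem_Ztri _, rfl⟩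
  have hcard : (Set.range (fun φ : (Fin K → Bool) → Bool => ball (treeX (epsOf K φ)) m)).ncard
      = 2 ^ (2 ^ K) := by
    rw [← Set.image_univ, Set.ncard_image_of_injective _ (ball_injective hK hm),
      Set.ncard_univ, Nat.card_eq_fintype_card]
    simp [Fintype.card_fun]
  rw [← hcard]
  exact Set.ncard_le_ncard hrange hfin

lemma sq_le_two_pow : ∀ k, 4 ≤ k → k * k ≤ 2 ^ k := by
  intro k hk
  induction k, hk using Nat.le_induction with
  | base => decide
  | succ n hn ih =>
    have h1 : 4 * n ≤ n * n := Nat.mul_le_mul_right n hn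
    have h2 : 2 ^ (n + 1) = 2 ^ n + 2 ^ n := by rw [pow_succ]; omega
    have h3 : (n + 1) * (n + 1) = n * n + (2 * n + 1) := by ring
    omega

lemma growth {c m : ℕ} (h : 8 * c + 9 ≤ m) : c * m ≤ 2 ^ ((m - 1) / 2) := by
  set K := (m - 1) / 2 with hK
  have h1 : 4 * c + 4 ≤ K := by omega
  have h2 : m ≤ 2 * K + 2 := by omega
  have h3 : c * m ≤ K * K := by nlinarith
  exact h3.trans (sq_le_two_pow K (by omega))

/-- The set of trivalent trees in `(X_2, d_2)` has infinite lower box dimension. -/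
theorem lowerBox_trivalent_eq_top : lowerBox Ztri = ⊤ := by
  have htend : Filter.Tendsto
      (fun m : ℕ => ENNReal.ofReal (Real.log (Lam Ztri m)) / (m : ℝ≥0∞))
      Filter.atTop (nhds ⊤) := by
    rw [ENNReal.tendsto_nhds_top_iff_nat]
    intro n
    filter_upwards [Filter.eventually_ge_atTop (8 * (2 * (n + 1)) + 9)] with m hm
    set K := (m - 1) / 2 with hK
    have hK1 : 1 ≤ K := by omega
    have hm2 : 2 * K + 1 ≤ m := by omega
    have hmpos : 0 < m := by omega
    have hΛ : 2 ^ (2 ^ K) ≤ Lam Ztri m := lam_lower hK1 hm2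
    have hgrow : 2 * (n + 1) * m ≤ 2 ^ K := growth hm
    have hlog : (((n + 1) * m : ℕ) : ℝ) ≤ Real.log (Lam Ztri m) := by
      have hc1 : ((2 : ℝ) ^ (2 ^ K)) ≤ ((Lam Ztri m : ℕ) : ℝ) := by
        exact_mod_cast hΛ
      have hc2 := Real.log_le_log (by positivity) hc1
      rw [Real.log_pow] at hc2
      have hc3 : ((2 * (n + 1) * m : ℕ) : ℝ) ≤ ((2 ^ K : ℕ) : ℝ) := by exact_mod_cast hgrow
      have hlog2 : (1 / 2 : ℝ) < Real.log 2 := by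
        have := Real.log_two_gt_d9
        linarith
      have hnn : (0 : ℝ) ≤ ((2 ^ K : ℕ) : ℝ) := by positivity
      push_cast at hc2 hc3 hnn ⊢
      nlinarith [hc2, hc3, hlog2, hnn,
        mul_nonneg hnn (le_of_lt (by linarith : (0 : ℝ) < Real.log 2 - 1 / 2))]
    calc (n : ℝ≥0∞) < ((n + 1 : ℕ) : ℝ≥0∞) := by exact_mod_cast Nat.lt_succ_self n
      _ = ((n + 1 : ℕ) : ℝ≥0∞) * (m : ℝ≥0∞) / (m : ℝ≥0∞) := by
          rw [mul_div_assoc, ENNReal.div_self (Nat.cast_ne_zero.mpr hmpos.ne')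
            (ENNReal.natCast_ne_top m), mul_one]
      _ = (((n + 1) * m : ℕ) : ℝ≥0∞) / (m : ℝ≥0∞) := by rw [Nat.cast_mul]
      _ = ENNReal.ofReal (((n + 1) * m : ℕ) : ℝ) / (m : ℝ≥0∞) := by
          rw [ENNReal.ofReal_natCast]
      _ ≤ ENNReal.ofReal (Real.log (Lam Ztri m)) / (m : ℝ≥0∞) :=
          ENNReal.div_le_div_right (ENNReal.ofReal_le_ofReal hlog) _
  exact htend.liminf_eq

end GraphTrees
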